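/- Let F be a field, let k ≥ 1, and set n = 2k. Let J_k ∈ M_k(F) denote the nilpotent Jordan block of size k (the matrix with 1 in positions (i, i+1) for 1 ≤ i ≤ k − 1 and 0 elsewhere), and let A ∈ M_n(F) be the block-diagonal matrix J_k ⊕ J_k. If S is a finite generating system of M_n(F) that contains A, then 2·ℓ(S) ≤ 5n − 4 (i.e., ℓ(S) ≤ 5n/2 − 2). -/

import Mathlib

open Polynomial Matrix

/-- The `F`-linear span of all words over `S` of length at most `i`
(the empty word being `1`). -/
def wordSpan (F : Type*) {A : Type*} [Field F] [Ring A] [Algebra F A]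
    (S : Set A) (i : ℕ) : Submodule F A :=
  Submodule.span F {x : A | ∃ l : List A, l.length ≤ i ∧ (∀ a ∈ l, a ∈ S) ∧ l.prod = x}

/-- `S` is a generating system of the algebra `A`:
`A` is the union of the subspaces `wordSpan F S i`. -/
def IsGeneratingSystem (F : Type*) {A : Type*} [Field F] [Ring A] [Algebra F A]
    (S : Set A) : Prop :=
  ∀ x : A, ∃ i : ℕ, x ∈ wordSpan F S i

/-- The length of a generating system `S`: the least `k` with `wordSpan F S k = ⊤`. -/
noncomputable def genLength (F : Type*) {A : Type*} [Field F] [Ring A] [Algebra F A]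
    (S : Set A) : ℕ :=
  sInf {k : ℕ | wordSpan F S k = ⊤}

/-- The nilpotent Jordan block of size `k`: ones on the superdiagonal, zeros elsewhere. -/
def nilJordanBlock (F : Type*) [Field F] (k : ℕ) : Matrix (Fin k) (Fin k) F :=
  Matrix.of fun i j => if (i : ℕ) + 1 = (j : ℕ) then 1 else 0

section WordLemmas

variable {F : Type*} {A : Type*} [Field F] [Ring A] [Algebra F A] {S : Set A}

lemma word_mem_wordSpan {i : ℕ} {l : List A} (hl : l.length ≤ i) (hS : ∀ a ∈ l, a ∈ S) :
    l.prod ∈ wordSpan F S i :=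
  Submodule.subset_span ⟨l, hl, hS, rfl⟩

lemma one_mem_wordSpan (i : ℕ) : (1 : A) ∈ wordSpan F S i := by
  simpa using word_mem_wordSpan (F := F) (S := S) (l := []) (by simp) (by simp)

lemma wordSpan_mono {i j : ℕ} (h : i ≤ j) : wordSpan F S i ≤ wordSpan F S j := by
  apply Submodule.span_mono
  rintro x ⟨l, hl, hS, rfl⟩
  exact ⟨l, hl.trans h, hS, rfl⟩

lemma mul_mem_wordSpan {i j : ℕ} {x y : A} (hx : x ∈ wordSpan F S i)
    (hy : y ∈ wordSpan F S j) : x * y ∈ wordSpan F S (i + j) := by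
  induction hx using Submodule.span_induction with
  | mem x hx =>
    induction hy using Submodule.span_induction with
    | mem y hy =>
      obtain ⟨l₁, hl₁, hS₁, rfl⟩ := hx
      obtain ⟨l₂, hl₂, hS₂, rfl⟩ := hy
      rw [← List.prod_append]
      refine word_mem_wordSpan (by simp; omega) ?_
      intro a ha
      rcases List.mem_append.1 ha with h | h
      · exact hS₁ a h
      · exact hS₂ a h
    | zero => simp
    | add y z _ _ hy hz => rw [mul_add]; exact add_mem hy hz
    | smul c y _ hy => rw [mul_smul_comm]; exact Submodule.smul_mem _ _ hy
  | zero => simp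
  | add x z _ _ hx' hz => rw [add_mul]; exact add_mem hx' hz
  | smul c x _ hx' => rw [smul_mul_assoc]; exact Submodule.smul_mem _ _ hx'

lemma mem_wordSpan_one {s : A} (hs : s ∈ S) : s ∈ wordSpan F S 1 := by
  simpa using word_mem_wordSpan (F := F) (S := S) (l := [s]) (by simp) (by simpa)

lemma pow_mem_wordSpan {s : A} (hs : s ∈ S) (ρ : ℕ) : s ^ ρ ∈ wordSpan F S ρ := by
  rw [← List.prod_replicate]
  exact word_mem_wordSpan (by simp) (by intro a ha; rw [List.eq_of_mem_replicate ha]; exact hs)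

end WordLemmas

section Chain

set_option linter.unusedSectionVars false

variable {F : Type*} {A : Type*} [Field F] [Ring A] [Algebra F A] {S : Set A}
variable {W : Type*} [AddCommGroup W] [Module F W] [FiniteDimensional F W]
  (f : A →ₗ[F] W) (g : A → (W →ₗ[F] W))

lemma map_g_le (hg : ∀ s ∈ S, ∀ x : A, f (s * x) = g s (f x)) {s : A} (hs : s ∈ S) (i : ℕ) :
    Submodule.map (g s) (Submodule.map f (wordSpan F S i))
      ≤ Submodule.map f (wordSpan F S (i + 1)) := by
  rintro _ ⟨_, ⟨x, hx, rfl⟩, rfl⟩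
  rw [← hg s hs x]
  exact ⟨s * x, by simpa [Nat.add_comm] using
    mul_mem_wordSpan (mem_wordSpan_one (F := F) hs) hx, rfl⟩

lemma map_succ_le (hg : ∀ s ∈ S, ∀ x : A, f (s * x) = g s (f x)) (i : ℕ) :
    Submodule.map f (wordSpan F S (i + 1)) ≤
      Submodule.map f (wordSpan F S i) ⊔
        ⨆ s ∈ S, Submodule.map (g s) (Submodule.map f (wordSpan F S i)) := by
  rw [wordSpan, Submodule.map_span, Submodule.span_le]
  rintro _ ⟨x, ⟨l, hl, hS, rfl⟩, rfl⟩
  match l with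
  | [] =>
    apply Submodule.mem_sup_left
    exact ⟨1, one_mem_wordSpan i, by simp⟩
  | a :: l' =>
    apply Submodule.mem_sup_right
    have ha : a ∈ S := hS a (by simp)
    apply Submodule.mem_iSup_of_mem a
    apply Submodule.mem_iSup_of_mem ha
    have hl' : l'.prod ∈ wordSpan F S i :=
      word_mem_wordSpan (by simpa using Nat.lt_succ_iff.mp (Nat.lt_of_lt_of_le (by simp) hl))
        (fun b hb => hS b (by simp [hb]))
    exact ⟨f l'.prod, ⟨l'.prod, hl', rfl⟩, by rw [← hg a ha]; simp⟩

lemma chain_stab (hg : ∀ s ∈ S, ∀ x : A, f (s * x) = g s (f x)) {i : ℕ}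
    (h : Submodule.map f (wordSpan F S (i + 1)) = Submodule.map f (wordSpan F S i)) :
    ∀ j, Submodule.map f (wordSpan F S (i + j)) ≤ Submodule.map f (wordSpan F S i) := by
  intro j
  induction j with
  | zero => exact le_rfl
  | succ j ih =>
    have h2 := map_succ_le (S := S) f g hg (i + j)
    refine le_trans h2 ?_
    apply sup_le
    · exact ih
    · apply iSup_le; intro s; apply iSup_le; intro hs
      exact le_trans (Submodule.map_mono ih) (le_trans (map_g_le f g hg hs i) h.le)

lemma chain_strict (hg : ∀ s ∈ S, ∀ x : A, f (s * x) = g s (f x))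
    (hgen : IsGeneratingSystem F S) (hsurj : Function.Surjective f) {i : ℕ}
    (h : Submodule.map f (wordSpan F S i) ≠ ⊤) :
    Submodule.map f (wordSpan F S i) < Submodule.map f (wordSpan F S (i + 1)) := by
  rcases lt_or_eq_of_le (Submodule.map_mono (wordSpan_mono (Nat.le_succ i))
    : Submodule.map f (wordSpan F S i) ≤ Submodule.map f (wordSpan F S (i + 1))) with h' | h'
  · exact h'
  · exfalso
    apply h
    rw [eq_top_iff]
    intro w _
    obtain ⟨x, rfl⟩ := hsurj w
    obtain ⟨j, hj⟩ := hgen x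
    have hmem : f x ∈ Submodule.map f (wordSpan F S j) := ⟨x, hj, rfl⟩
    rcases le_or_gt j i with hji | hij
    · exact Submodule.map_mono (wordSpan_mono hji) hmem
    · have : f x ∈ Submodule.map f (wordSpan F S (i + (j - i))) := by
        rwa [Nat.add_sub_cancel' hij.le]
      exact chain_stab f g hg h'.symm (j - i) this

lemma chain_top (hg : ∀ s ∈ S, ∀ x : A, f (s * x) = g s (f x))
    (hgen : IsGeneratingSystem F S) (hsurj : Function.Surjective f) (hone : f 1 ≠ 0) :
    Submodule.map f (wordSpan F S (Module.finrank F W - 1)) = ⊤ := by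
  have key : ∀ i : ℕ, Submodule.map f (wordSpan F S i) = ⊤ ∨
      i + 1 ≤ Module.finrank F ↥(Submodule.map f (wordSpan F S i)) := by
    intro i
    induction i with
    | zero =>
      by_cases h : Submodule.map f (wordSpan F S 0) = ⊤
      · exact Or.inl h
      · right
        rw [Nat.succ_le_iff, Nat.pos_iff_ne_zero]
        intro h0
        rw [Submodule.finrank_eq_zero] at h0
        apply hone
        have : f 1 ∈ Submodule.map f (wordSpan F S 0) := ⟨1, one_mem_wordSpan 0, rfl⟩
        rw [h0] at this
        simpa using this
    | succ i ih =>
      by_cases h : Submodule.map f (wordSpan F S (i + 1)) = ⊤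
      · exact Or.inl h
      · right
        have hi : Submodule.map f (wordSpan F S i) ≠ ⊤ := by
          intro he
          apply h
          rw [eq_top_iff, ← he]
          exact Submodule.map_mono (wordSpan_mono (Nat.le_succ i))
        have hlt := chain_strict f g hg hgen hsurj hi
        have := Submodule.finrank_lt_finrank_of_lt hlt
        rcases ih with h' | h'
        · exact absurd h' hi
        · omega
  rcases key (Module.finrank F W - 1) with h | h
  · exact h
  · apply Submodule.eq_top_of_finrank_eq
    have hle := Submodule.finrank_le (Submodule.map f (wordSpan F S (Module.finrank F W - 1)))
    rcases Nat.eq_zero_or_pos (Module.finrank F W) with h0 | h0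
    · omega
    · omega

end Chain

section BmatLemmas

variable {F : Type*} [Field F] {k : ℕ}

noncomputable def Bmat (F : Type*) [Field F] (k : ℕ) : Matrix (Fin (2 * k)) (Fin (2 * k)) F :=
  Matrix.reindex (finSumFinEquiv.trans (finCongr (two_mul k).symm))
    (finSumFinEquiv.trans (finCongr (two_mul k).symm))
    (Matrix.fromBlocks (nilJordanBlock F k) 0 0 (nilJordanBlock F k))

lemma esymm_apply (a : Fin (2 * k)) :
    (finSumFinEquiv.trans (finCongr (two_mul k).symm)).symm a =
      if h : (a : ℕ) < k then Sum.inl ⟨a, h⟩ else Sum.inr ⟨(a : ℕ) - k, by omega⟩ := by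
  rw [Equiv.symm_apply_eq]
  split_ifs with h
  · apply Fin.ext
    simp [finSumFinEquiv_apply_left]
  · apply Fin.ext
    simp [finSumFinEquiv_apply_right]
    omega

lemma Bmat_apply (a b : Fin (2 * k)) :
    Bmat F k a b = if (a : ℕ) + 1 = (b : ℕ) ∧ (b : ℕ) ≠ k then 1 else 0 := by
  rw [Bmat, reindex_apply, submatrix_apply, esymm_apply, esymm_apply]
  have ha := a.isLt
  have hb := b.isLt
  split_ifs with h1 h2 h3 <;>
    simp only [fromBlocks_apply₁₁, fromBlocks_apply₁₂, fromBlocks_apply₂₁, fromBlocks_apply₂₂,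
      nilJordanBlock, of_apply, Matrix.zero_apply] <;>
  · first
    | (split_ifs with h4 <;> first | rfl | omega)
    | omega

lemma Bmat_pow_apply (ρ : ℕ) (a b : Fin (2 * k)) :
    (Bmat F k ^ ρ) a b =
      if (a : ℕ) + ρ = (b : ℕ) ∧ ((a : ℕ) < k ↔ (b : ℕ) < k) then 1 else 0 := by
  induction ρ generalizing b with
  | zero =>
    have hiff : ((a : ℕ) + 0 = (b : ℕ) ∧ ((a : ℕ) < k ↔ (b : ℕ) < k)) ↔ a = b := by
      constructor
      · rintro ⟨h1, _⟩; exact Fin.ext (by omega)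
      · rintro rfl; exact ⟨by omega, Iff.rfl⟩
    rw [pow_zero, Matrix.one_apply, if_congr hiff rfl rfl]
  | succ ρ ih =>
    rw [pow_succ, Matrix.mul_apply]
    by_cases hb : 1 ≤ (b : ℕ) ∧ (b : ℕ) ≠ k
    · have hb2 : (b : ℕ) - 1 < 2 * k := by omega
      rw [Finset.sum_eq_single (⟨(b : ℕ) - 1, hb2⟩ : Fin (2 * k))]
      · rw [ih, Bmat_apply]
        simp only [Fin.val_mk]
        split_ifs with h1 h2 h3 <;> first | rfl | omega | simp
      · intro c _ hc
        rw [Bmat_apply]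
        have : ¬((c : ℕ) + 1 = (b : ℕ) ∧ (b : ℕ) ≠ k) := by
          intro ⟨h1, h2⟩
          exact hc (Fin.ext (show (c : ℕ) = (b : ℕ) - 1 by omega))
        simp [this]
      · intro h; exact absurd (Finset.mem_univ _) h
    · have hz : ∀ c : Fin (2 * k), (Bmat F k ^ ρ) a c * Bmat F k c b = 0 := by
        intro c
        rw [Bmat_apply]
        have : ¬((c : ℕ) + 1 = (b : ℕ) ∧ (b : ℕ) ≠ k) := by omega
        simp [this]
      rw [Finset.sum_congr rfl (fun c _ => hz c), Finset.sum_const_zero]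
      have : ¬((a : ℕ) + (ρ + 1) = (b : ℕ) ∧ ((a : ℕ) < k ↔ (b : ℕ) < k)) := by
        intro ⟨h1, h2⟩
        omega
      simp [this]

end BmatLemmas

theorem length_le_of_two_jordan_blocks_mem
    (F : Type*) [Field F] (k : ℕ) (hk : 1 ≤ k)
    (S : Finset (Matrix (Fin (2 * k)) (Fin (2 * k)) F))
    (hgen : IsGeneratingSystem F (S : Set (Matrix (Fin (2 * k)) (Fin (2 * k)) F)))
    (hmem : (Matrix.reindex (finSumFinEquiv.trans (finCongr (two_mul k).symm))
        (finSumFinEquiv.trans (finCongr (two_mul k).symm))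
        (Matrix.fromBlocks (nilJordanBlock F k) 0 0 (nilJordanBlock F k))) ∈ S) :
    2 * genLength F (S : Set (Matrix (Fin (2 * k)) (Fin (2 * k)) F)) ≤ 5 * (2 * k) - 4 := by
  classical
  set SS : Set (Matrix (Fin (2 * k)) (Fin (2 * k)) F) := ((S : Finset (Matrix (Fin (2 * k)) (Fin (2 * k)) F)) : Set (Matrix (Fin (2 * k)) (Fin (2 * k)) F)) with hSS
  have hmemB : Bmat F k ∈ SS := by
    simpa [Bmat, hSS] using hmem
  -- the two distinguished column indices
  have h0lt : 0 < 2 * k := by omega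
  have hklt : k < 2 * k := by omega
  set u₁ : Fin (2 * k) := ⟨0, h0lt⟩ with hu₁
  set u₂ : Fin (2 * k) := ⟨k, hklt⟩ with hu₂
  -- the pair-of-columns map
  set f : Matrix (Fin (2 * k)) (Fin (2 * k)) F →ₗ[F] ((Fin (2 * k) → F) × (Fin (2 * k) → F)) :=
    { toFun := fun X => (fun i => X i u₁, fun i => X i u₂)
      map_add' := fun X Y => rfl
      map_smul' := fun c X => rfl } with hf
  set g : Matrix (Fin (2 * k)) (Fin (2 * k)) F →
      (((Fin (2 * k) → F) × (Fin (2 * k) → F)) →ₗ[F] ((Fin (2 * k) → F) × (Fin (2 * k) → F))) :=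
    fun M => LinearMap.prodMap (Matrix.mulVecLin M) (Matrix.mulVecLin M) with hg
  have hcompat : ∀ s ∈ SS, ∀ X, f (s * X) = g s (f X) := by
    intro s _ X
    simp only [hf, hg, LinearMap.coe_mk, AddHom.coe_mk, LinearMap.prodMap_apply, Prod.mk.injEq]
    constructor <;>
    · funext i
      simp [Matrix.mulVecLin, Matrix.mulVec, Matrix.mul_apply, dotProduct]
  have hsurj : Function.Surjective f := by
    intro y
    refine ⟨Matrix.of fun i j => if j = u₁ then y.1 i else if j = u₂ then y.2 i else 0, ?_⟩
    have hne : u₂ ≠ u₁ := by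
      intro h
      have := congrArg Fin.val h
      simp [hu₁, hu₂] at this
      omega
    simp only [hf, LinearMap.coe_mk, AddHom.coe_mk, Matrix.of_apply]
    exact Prod.ext (by funext i; exact (if_pos rfl : (if u₁ = u₁ then y.1 i else if u₁ = u₂ then y.2 i else 0) = y.1 i)) (by funext i; exact (if_neg hne).trans (if_pos rfl))
  have hone : f 1 ≠ 0 := by
    intro h
    have := congrFun (congrArg Prod.fst h) u₁
    exact one_ne_zero ((Matrix.one_apply_eq u₁).symm.trans this)
  have hfrW : Module.finrank F ((Fin (2 * k) → F) × (Fin (2 * k) → F)) = 4 * k := by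
    rw [Module.finrank_prod, Module.finrank_pi, Fintype.card_fin]
    ring
  have hchain := chain_top (S := SS) f g hcompat hgen hsurj hone
  rw [hfrW] at hchain
  -- realize arbitrary column pairs by elements of L_{4k-1}
  have hreal : ∀ y : (Fin (2 * k) → F) × (Fin (2 * k) → F),
      ∃ X ∈ wordSpan F SS (4 * k - 1), f X = y := by
    intro y
    have : y ∈ Submodule.map f (wordSpan F SS (4 * k - 1)) := by rw [hchain]; trivial
    obtain ⟨X, hX, hXy⟩ := this
    exact ⟨X, hX, hXy⟩
  -- main downward induction on the level of the column
  have Emem : ∀ t : ℕ, ∀ j : Fin (2 * k), ∀ i : Fin (2 * k),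
      (((j : ℕ) < k ∧ (j : ℕ) + t = k) ∨ (k ≤ (j : ℕ) ∧ (j : ℕ) + t = 2 * k)) →
      Matrix.single i j (1 : F) ∈ wordSpan F SS (5 * k - 2) := by
    intro t
    induction t using Nat.strong_induction_on with
    | _ t IH =>
      intro j i hC
      have hjlt := j.isLt
      have ht1 : 1 ≤ t := by omega
      have htk : t ≤ k := by omega
      set ρ : ℕ := k - t with hρ
      -- the prescribed column pair
      set y : (Fin (2 * k) → F) × (Fin (2 * k) → F) :=
        if (j : ℕ) < k then (Pi.single i 1, 0) else (0, Pi.single i 1) with hy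
      obtain ⟨X, hXmem, hXy⟩ := hreal y
      set Y := X * (Bmat F k) ^ ρ with hYdef
      have hYmem : Y ∈ wordSpan F SS (5 * k - 2) := by
        apply wordSpan_mono (show 4 * k - 1 + ρ ≤ 5 * k - 2 by omega)
        exact mul_mem_wordSpan hXmem (pow_mem_wordSpan hmemB ρ)
      -- entries of Y
      have hY : ∀ a b : Fin (2 * k), Y a b =
          if h : (ρ ≤ (b : ℕ) ∧ (b : ℕ) < k) ∨ (k + ρ ≤ (b : ℕ))
          then X a ⟨(b : ℕ) - ρ, by omega⟩ else 0 := by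
        intro a b
        rw [hYdef, Matrix.mul_apply]
        by_cases h : (ρ ≤ (b : ℕ) ∧ (b : ℕ) < k) ∨ (k + ρ ≤ (b : ℕ))
        · rw [dif_pos h]
          have hblt := b.isLt
          rw [Finset.sum_eq_single (⟨(b : ℕ) - ρ, by omega⟩ : Fin (2 * k))]
          · rw [Bmat_pow_apply]
            simp only [Fin.val_mk]
            rw [if_pos (by constructor <;> omega)]
            rw [mul_one]
          · intro c _ hc
            rw [Bmat_pow_apply]
            have : ¬((c : ℕ) + ρ = (b : ℕ) ∧ ((c : ℕ) < k ↔ (b : ℕ) < k)) := by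
              intro ⟨h1, h2⟩
              exact hc (Fin.ext (show (c : ℕ) = (b : ℕ) - ρ by omega))
            simp [this]
          · intro h'; exact absurd (Finset.mem_univ _) h'
        · rw [dif_neg h]
          apply Finset.sum_eq_zero
          intro c _
          rw [Bmat_pow_apply]
          have hblt := b.isLt
          have : ¬((c : ℕ) + ρ = (b : ℕ) ∧ ((c : ℕ) < k ↔ (b : ℕ) < k)) := by
            intro ⟨h1, h2⟩
            omega
          simp [this]
      -- std basis matrix entries
      have hE : ∀ (i' j' a b : Fin (2 * k)), Matrix.single i' j' (1 : F) a b
          = if i' = a ∧ j' = b then 1 else 0 := by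
        intro i' j' a b
        simp [Matrix.single]
      -- the difference is supported on higher-level columns
      have hsupp : ∀ a b : Fin (2 * k),
          (Y - Matrix.single i j (1 : F)) a b ≠ 0 →
          (((b : ℕ) < k ∧ ρ < (b : ℕ)) ∨ (k ≤ (b : ℕ) ∧ k + ρ < (b : ℕ))) := by
        intro a b hne
        by_contra hcon
        apply hne
        have hblt := b.isLt
        simp only [Matrix.sub_apply]
        rw [hY, hE]
        push_neg at hcon
        have hcases : (¬((ρ ≤ (b : ℕ) ∧ (b : ℕ) < k) ∨ (k + ρ ≤ (b : ℕ))))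
            ∨ (b : ℕ) = ρ ∨ (b : ℕ) = k + ρ := by omega
        rcases hcases with h | h | h
        · rw [dif_neg h]
          have : ¬(i = a ∧ j = b) := by
            rintro ⟨rfl, rfl⟩
            -- j = b : contradiction with level of j being exactly ρ and h
            omega
          rw [if_neg this]
          simp
        · -- b = ρ, so b - ρ = 0, the column is u₁
          have hcond : ((ρ ≤ (b : ℕ) ∧ (b : ℕ) < k) ∨ (k + ρ ≤ (b : ℕ))) := by omega
          rw [dif_pos hcond]
          have hu : (⟨(b : ℕ) - ρ, by omega⟩ : Fin (2 * k)) = u₁ := by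
            apply Fin.ext; simp [hu₁]; omega
          rw [hu]
          have hX1 : X a u₁ = y.1 a := by
            have := congrFun (congrArg Prod.fst hXy) a
            exact this
          rw [hX1, hy]
          by_cases hjk : (j : ℕ) < k
          · -- j is in the first block, j = ρ = b
            have hjb : j = b := by apply Fin.ext; omega
            rw [if_pos hjk]
            simp only
            rw [Pi.single_apply]
            by_cases hai : a = i
            · subst hai
              rw [if_pos rfl, if_pos ⟨rfl, hjb⟩]
              ring
            · rw [if_neg hai, if_neg (fun h => hai h.1.symm)]
              ring
          · -- j in second block, but b in first block: both sides 0
            rw [if_neg hjk]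
            have : ¬(i = a ∧ j = b) := by
              rintro ⟨rfl, rfl⟩; omega
            rw [if_neg this]
            simp
        · -- b = k + ρ, column is u₂
          have hcond : ((ρ ≤ (b : ℕ) ∧ (b : ℕ) < k) ∨ (k + ρ ≤ (b : ℕ))) := by omega
          rw [dif_pos hcond]
          have hu : (⟨(b : ℕ) - ρ, by omega⟩ : Fin (2 * k)) = u₂ := by
            apply Fin.ext; simp [hu₂]; omega
          rw [hu]
          have hX2 : X a u₂ = y.2 a := by
            have := congrFun (congrArg Prod.snd hXy) a
            exact this
          rw [hX2, hy]
          by_cases hjk : (j : ℕ) < k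
          · rw [if_pos hjk]
            have : ¬(i = a ∧ j = b) := by
              rintro ⟨rfl, rfl⟩; omega
            rw [if_neg this]
            simp
          · have hjb : j = b := by apply Fin.ext; omega
            rw [if_neg hjk]
            simp only
            rw [Pi.single_apply]
            by_cases hai : a = i
            · subst hai
              rw [if_pos rfl, if_pos ⟨rfl, hjb⟩]
              ring
            · rw [if_neg hai, if_neg (fun h => hai h.1.symm)]
              ring
      -- now assemble
      have hZmem : Y - Matrix.single i j (1 : F) ∈ wordSpan F SS (5 * k - 2) := by
        set Z := Y - Matrix.single i j (1 : F) with hZ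
        rw [Matrix.matrix_eq_sum_single Z]
        apply Submodule.sum_mem
        intro a _
        apply Submodule.sum_mem
        intro b _
        by_cases hzero : Z a b = 0
        · rw [hzero]
          simp only [Matrix.single_zero]
          exact Submodule.zero_mem _
        · have hhi := hsupp a b hzero
          have hstd : Matrix.single a b (Z a b) = Z a b • Matrix.single a b (1 : F) := by
            ext a' b'
            simp only [Matrix.single, Matrix.of_apply, Matrix.smul_apply, smul_eq_mul]
            split_ifs <;> simp
          rw [hstd]
          apply Submodule.smul_mem
          -- apply IH with smaller t
          have hblt := b.isLt
          rcases hhi with ⟨hb1, hb2⟩ | ⟨hb1, hb2⟩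
          · exact IH (k - (b : ℕ)) (by omega) b a (Or.inl ⟨hb1, by omega⟩)
          · exact IH (2 * k - (b : ℕ)) (by omega) b a (Or.inr ⟨hb1, by omega⟩)
      have : Matrix.single i j (1 : F) = Y - (Y - Matrix.single i j (1 : F)) := by
        abel
      rw [this]
      exact Submodule.sub_mem _ hYmem hZmem
  -- wordSpan at 5k-2 is everything
  have htop : wordSpan F SS (5 * k - 2) = ⊤ := by
    rw [eq_top_iff]
    intro M _
    rw [Matrix.matrix_eq_sum_single M]
    apply Submodule.sum_mem
    intro a _
    apply Submodule.sum_mem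
    intro b _
    have hstd : Matrix.single a b (M a b) = M a b • Matrix.single a b (1 : F) := by
      ext a' b'
      simp only [Matrix.single, Matrix.of_apply, Matrix.smul_apply, smul_eq_mul]
      split_ifs <;> simp
    rw [hstd]
    apply Submodule.smul_mem
    have hblt := b.isLt
    by_cases hbk : (b : ℕ) < k
    · exact Emem (k - (b : ℕ)) b a (Or.inl ⟨hbk, by omega⟩)
    · exact Emem (2 * k - (b : ℕ)) b a (Or.inr ⟨by omega, by omega⟩)
  have hlen : genLength F SS ≤ 5 * k - 2 := Nat.sInf_le htop
  omega
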